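/- Let E be a Banach space, X : E → E a C¹ vector field, and f : E → ℝ a C¹ proper function (preimages of compact intervals are compact) such that |df_p(X(p))| ≤ C₁|f(p)| + C₂ for all p ∈ E and some constants C₁, C₂ > 0. Then every maximal integral curve of X is defined on all of ℝ. -/

import Mathlib

open Set Metric Real
open scoped NNReal Manifold

section Aux

variable {E : Type*} [NormedAddCommGroup E] [NormedSpace ℝ E]

/-- Monotonicity of `gronwallBound` in the time variable. -/
lemma my_gronwallBound_mono {δ K ε : ℝ} (hδ : 0 ≤ δ) (hK : 0 < K) (hε : 0 ≤ ε)
    {x y : ℝ} (hxy : x ≤ y) : gronwallBound δ K ε x ≤ gronwallBound δ K ε y := by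
  simp only [gronwallBound_of_K_ne_0 hK.ne']
  have h : Real.exp (K * x) ≤ Real.exp (K * y) :=
    Real.exp_le_exp.2 (mul_le_mul_of_nonneg_left hxy hK.le)
  have hεK : 0 ≤ ε / K := div_nonneg hε hK.le
  nlinarith [mul_le_mul_of_nonneg_left h hδ, mul_le_mul_of_nonneg_left h hεK]

/-- One-sided Grönwall estimate along a solution of an autonomous ODE. -/
lemma my_gron_right {Y : E → E} {f : E → ℝ} (hf : ContDiff ℝ 1 f) {C₁ C₂ : ℝ}
    (hbound : ∀ p, |fderiv ℝ f p (Y p)| ≤ C₁ * |f p| + C₂)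
    {γ : ℝ → E} {α β : ℝ} (hγ : ∀ s ∈ Ioo α β, HasDerivAt γ (Y (γ s)) s)
    {t₀ t : ℝ} (ht₀ : t₀ ∈ Ioo α β) (ht : t ∈ Ioo α β) (h : t₀ ≤ t) :
    |f (γ t)| ≤ gronwallBound |f (γ t₀)| C₁ C₂ (t - t₀) := by
  have hsub : Icc t₀ t ⊆ Ioo α β := fun s hs => ⟨lt_of_lt_of_le ht₀.1 hs.1, lt_of_le_of_lt hs.2 ht.2⟩
  have hds : ∀ s ∈ Icc t₀ t,
      HasDerivAt (fun u => f (γ u)) (fderiv ℝ f (γ s) (Y (γ s))) s := fun s hs =>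
    ((hf.differentiable one_ne_zero (γ s)).hasFDerivAt).comp_hasDerivAt s (hγ s (hsub hs))
  have key := norm_le_gronwallBound_of_norm_deriv_right_le
    (f := fun s => f (γ s)) (f' := fun s => fderiv ℝ f (γ s) (Y (γ s)))
    (a := t₀) (b := t) (δ := |f (γ t₀)|) (K := C₁) (ε := C₂)
    (fun s hs => (hds s hs).continuousAt.continuousWithinAt)
    (fun s hs => (hds s (Ico_subset_Icc_self hs)).hasDerivWithinAt)
    (by rw [Real.norm_eq_abs])
    (fun s hs => by rw [Real.norm_eq_abs, Real.norm_eq_abs]; exact hbound (γ s))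
  have := key t ⟨h, le_rfl⟩
  rwa [Real.norm_eq_abs] at this

/-- Two-sided Grönwall estimate along a solution of an autonomous ODE. -/
lemma my_gron_two {Y : E → E} {f : E → ℝ} (hf : ContDiff ℝ 1 f) {C₁ C₂ : ℝ}
    (hbound : ∀ p, |fderiv ℝ f p (Y p)| ≤ C₁ * |f p| + C₂)
    {γ : ℝ → E} {α β : ℝ} (hγ : ∀ s ∈ Ioo α β, HasDerivAt γ (Y (γ s)) s)
    {t₀ t : ℝ} (ht₀ : t₀ ∈ Ioo α β) (ht : t ∈ Ioo α β) :
    |f (γ t)| ≤ gronwallBound |f (γ t₀)| C₁ C₂ |t - t₀| := by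
  rcases le_total t₀ t with h | h
  · rw [show |t - t₀| = t - t₀ from abs_of_nonneg (by linarith)]
    exact my_gron_right hf hbound hγ ht₀ ht h
  · -- time reversal
    set γ' : ℝ → E := fun s => γ (2 * t₀ - s) with hγ'def
    have hbound' : ∀ p, |fderiv ℝ f p (-(Y p))| ≤ C₁ * |f p| + C₂ := fun p => by
      rw [map_neg, abs_neg]; exact hbound p
    have hγ' : ∀ s ∈ Ioo (2 * t₀ - β) (2 * t₀ - α), HasDerivAt γ' (-(Y (γ' s))) s := by
      intro s hs
      have hmem : 2 * t₀ - s ∈ Ioo α β := ⟨by linarith [hs.2], by linarith [hs.1]⟩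
      have h1 : HasDerivAt (fun s : ℝ => 2 * t₀ - s) (-1) s := by
        simpa using (hasDerivAt_id s).const_sub (2 * t₀)
      have := (hγ _ hmem).scomp s h1
      simpa [hγ'def, Function.comp_def] using this
    have ht₀' : t₀ ∈ Ioo (2 * t₀ - β) (2 * t₀ - α) := ⟨by linarith [ht₀.2], by linarith [ht₀.1]⟩
    have ht' : 2 * t₀ - t ∈ Ioo (2 * t₀ - β) (2 * t₀ - α) := ⟨by linarith [ht.2], by linarith [ht.1]⟩
    have key := my_gron_right hf hbound' hγ' ht₀' ht' (by linarith)
    have e1 : γ' (2 * t₀ - t) = γ t := by simp [hγ'def]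
    have e2 : γ' t₀ = γ t₀ := by
      simp only [hγ'def]; norm_num [two_mul]
    rw [e1, e2] at key
    rwa [show |t - t₀| = 2 * t₀ - t - t₀ from by rw [abs_of_nonpos (by linarith)]; ring]

variable [CompleteSpace E]

/-- Properness of a continuous function to `ℝ` forces `E` to be finite dimensional. -/
lemma my_findim {f : E → ℝ} (hproper : ∀ a b : ℝ, IsCompact (f ⁻¹' Icc a b)) :
    FiniteDimensional ℝ E := by
  have hcover : (⋃ n : ℕ, f ⁻¹' Icc (-(n : ℝ)) n) = univ := by
    ext x
    simp only [mem_iUnion, mem_preimage, mem_Icc, mem_univ, iff_true]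
    have h := abs_le.mp (Nat.le_ceil |f x|)
    exact ⟨⌈|f x|⌉₊, h.1, h.2⟩
  obtain ⟨n, x, hx⟩ := nonempty_interior_of_iUnion_of_closed
    (fun n : ℕ => (hproper (-(n : ℝ)) n).isClosed) hcover
  obtain ⟨r, hr, hball⟩ := Metric.isOpen_iff.mp isOpen_interior x hx
  have hcb : IsCompact (closedBall x (r / 2)) := by
    refine (hproper (-(n : ℝ)) n).of_isClosed_subset isClosed_closedBall ?_
    exact ((closedBall_subset_ball (by linarith)).trans hball).trans interior_subset
  exact FiniteDimensional.of_isCompact_closedBall ℝ (by linarith) hcb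

/-- A `C¹` field is Lipschitz on closed balls (finite dimensions). -/
lemma my_lip_on_ball [FiniteDimensional ℝ E] {X : E → E} (hX : ContDiff ℝ 1 X) (R : ℝ) :
    ∃ L : ℝ≥0, LipschitzOnWith L X (closedBall (0 : E) R) := by
  obtain ⟨C, hC⟩ := (isCompact_closedBall (0 : E) R).exists_bound_of_continuousOn
    (hX.continuous_fderiv one_ne_zero).continuousOn
  refine ⟨C.toNNReal, Convex.lipschitzOnWith_of_nnnorm_fderiv_le
    (fun x _ => (hX.differentiable one_ne_zero).differentiableAt) (fun x hx => ?_)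
    (convex_closedBall _ _)⟩
  rw [← NNReal.coe_le_coe, coe_nnnorm, Real.coe_toNNReal']
  exact (hC x hx).trans (le_max_left _ _)

/-- Gluing a compatible family of local solutions into a global one. -/
lemma my_glue {Y : E → E} (x₀ : E) (γ : ℕ → ℝ → E)
    (h0 : ∀ n, γ n 0 = x₀)
    (hd : ∀ n : ℕ, ∀ t ∈ Ioo (-(n + 1 : ℝ)) (n + 1), HasDerivAt (γ n) (Y (γ n t)) t)
    (huniq : ∀ n m : ℕ, n ≤ m → EqOn (γ n) (γ m) (Ioo (-(n + 1 : ℝ)) (n + 1))) :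
    ∃ g : ℝ → E, g 0 = x₀ ∧ ∀ t, HasDerivAt g (Y (g t)) t := by
  have hmem : ∀ t : ℝ, t ∈ Ioo (-((⌈|t|⌉₊ : ℝ) + 1)) ((⌈|t|⌉₊ : ℝ) + 1) := fun t => by
    have h := abs_le.mp (Nat.le_ceil |t|)
    exact ⟨by linarith [h.1], by linarith [h.2]⟩
  have heq : ∀ n : ℕ, ∀ t ∈ Ioo (-(n + 1 : ℝ)) (n + 1), γ ⌈|t|⌉₊ t = γ n t := by
    intro n t ht
    have hc1 : ((⌈|t|⌉₊ : ℝ) + 1) ≤ ((max ⌈|t|⌉₊ n : ℕ) : ℝ) + 1 := by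
      have : (⌈|t|⌉₊ : ℝ) ≤ ((max ⌈|t|⌉₊ n : ℕ) : ℝ) := Nat.cast_le.2 (le_max_left _ _)
      linarith
    have hc2 : ((n : ℝ) + 1) ≤ ((max ⌈|t|⌉₊ n : ℕ) : ℝ) + 1 := by
      have : (n : ℝ) ≤ ((max ⌈|t|⌉₊ n : ℕ) : ℝ) := Nat.cast_le.2 (le_max_right _ _)
      linarith
    have h1 := huniq ⌈|t|⌉₊ (max ⌈|t|⌉₊ n) (le_max_left _ _) (hmem t)
    have h2 := huniq n (max ⌈|t|⌉₊ n) (le_max_right _ _) ht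
    rw [h1, h2]
  refine ⟨fun t => γ ⌈|t|⌉₊ t, by simp [h0], fun t => ?_⟩
  have hopen : Ioo (-((⌈|t|⌉₊ : ℝ) + 1)) ((⌈|t|⌉₊ : ℝ) + 1) ∈ nhds t :=
    Ioo_mem_nhds (hmem t).1 (hmem t).2
  have hee : (fun s => γ ⌈|s|⌉₊ s) =ᶠ[nhds t] γ ⌈|t|⌉₊ :=
    Filter.eventuallyEq_of_mem hopen (fun s hs => heq ⌈|t|⌉₊ s hs)
  have hder := hd ⌈|t|⌉₊ t (hmem t)
  have := hder.congr_of_eventuallyEq hee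
  rwa [heq ⌈|t|⌉₊ t (hmem t)] at this

/-- Global existence for a globally bounded, globally Lipschitz field. -/
lemma my_global_exist {Y : E → E} {L : ℝ≥0} (hL : LipschitzWith L Y)
    {Cb : ℝ} (hCb : ∀ x, ‖Y x‖ ≤ Cb) (x₀ : E) :
    ∃ γ : ℝ → E, γ 0 = x₀ ∧ ∀ t, HasDerivAt γ (Y (γ t)) t := by
  have hCb0 : 0 ≤ Cb := (norm_nonneg _).trans (hCb x₀)
  have hsol : ∀ n : ℕ, ∃ α : ℝ → E, α 0 = x₀ ∧
      ∀ t ∈ Icc (-(n + 1 : ℝ)) (n + 1), HasDerivWithinAt α (Y (α t)) (Icc (-(n + 1 : ℝ)) (n + 1)) t := by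
    intro n
    have hpl : IsPicardLindelof (fun _ : ℝ => Y) (tmin := -(n + 1 : ℝ)) (tmax := n + 1)
        ⟨0, ⟨neg_nonpos.mpr (by positivity), by positivity⟩⟩ x₀ (Cb * (n + 1)).toNNReal 0
        Cb.toNNReal L :=
      IsPicardLindelof.of_time_independent
        (fun x _ => (hCb x).trans (Real.le_coe_toNNReal Cb)) hL.lipschitzOnWith
        (by simp [Real.coe_toNNReal _ hCb0,
          Real.coe_toNNReal _ (by positivity : (0 : ℝ) ≤ Cb * (n + 1))])
    exact hpl.exists_eq_forall_mem_Icc_hasDerivWithinAt₀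
  choose α hα0 hα using hsol
  have hd : ∀ n : ℕ, ∀ t ∈ Ioo (-(n + 1 : ℝ)) (n + 1), HasDerivAt (α n) (Y (α n t)) t :=
    fun n t ht => (hα n t (Ioo_subset_Icc_self ht)).hasDerivAt (Icc_mem_nhds ht.1 ht.2)
  refine my_glue x₀ α hα0 hd (fun n m hnm => fun t ht => ?_)
  have hnm' : ((n : ℝ) + 1) ≤ ((m : ℝ) + 1) := by
    have : (n : ℝ) ≤ m := Nat.cast_le.2 hnm
    linarith
  have hsub : Ioo (-(n + 1 : ℝ)) (n + 1) ⊆ Ioo (-(m + 1 : ℝ)) (m + 1) :=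
    Ioo_subset_Ioo (by linarith) hnm'
  have hsubIcc : Icc (-(n + 1 : ℝ)) (n + 1) ⊆ Icc (-(m + 1 : ℝ)) (m + 1) :=
    Icc_subset_Icc (by linarith) hnm'
  have key := ODE_solution_unique_of_mem_Icc (v := fun _ : ℝ => Y) (s := fun _ : ℝ => (univ : Set E))
    (fun _ _ => hL.lipschitzOnWith)
    (show (0 : ℝ) ∈ Ioo (-(n + 1 : ℝ)) (n + 1) from
      ⟨neg_lt_zero.mpr (by positivity), by positivity⟩)
    (fun s hs => (hα n s hs).continuousWithinAt)
    (fun s hs => hd n s hs) (fun _ _ => mem_univ _)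
    (fun s hs => ((hα m s (hsubIcc hs)).continuousWithinAt).mono hsubIcc)
    (fun s hs => hd m s (hsub hs)) (fun _ _ => mem_univ _)
    (by rw [hα0 n, hα0 m])
  exact key (Ioo_subset_Icc_self ht)


/-- A `C¹` cutoff equal to `1` on a compact set and vanishing outside a ball. -/
lemma my_cutoff [FiniteDimensional ℝ E] {K : Set E} (hK : IsCompact K) :
    ∃ χ : E → ℝ, ContDiff ℝ 1 χ ∧ (∀ x, χ x ∈ Icc (0 : ℝ) 1) ∧ EqOn χ 1 K ∧
      ∃ R : ℝ, ∀ x, x ∉ closedBall (0 : E) R → χ x = 0 := by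
  obtain ⟨R, hR⟩ := hK.isBounded.subset_closedBall (0 : E)
  have hs : IsClosed ((ball (0 : E) (R + 1))ᶜ) := isClosed_compl_iff.mpr isOpen_ball
  have hd : Disjoint ((ball (0 : E) (R + 1))ᶜ) K := by
    rw [disjoint_compl_left_iff_subset]
    exact hR.trans (closedBall_subset_ball (by linarith))
  obtain ⟨χ, hχ0, hχ1, hχ01⟩ := exists_contMDiffMap_zero_one_of_isClosed (n := ⊤) (𝓘(ℝ, E)) hs hK.isClosed hd
  refine ⟨χ, (contMDiff_iff_contDiff.mp χ.contMDiff).of_le (by exact_mod_cast le_top), hχ01, hχ1,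
    R + 1, fun x hx => ?_⟩
  have hxmem : x ∈ (ball (0 : E) (R + 1))ᶜ := fun h => hx (ball_subset_closedBall h)
  simpa using hχ0 hxmem

/-- The truncated field is globally Lipschitz and bounded. -/
lemma my_truncate [FiniteDimensional ℝ E] {X : E → E} (hX : ContDiff ℝ 1 X)
    {χ : E → ℝ} (hχ : ContDiff ℝ 1 χ) (hχ01 : ∀ x, χ x ∈ Icc (0 : ℝ) 1)
    {R : ℝ} (hχ0 : ∀ x, x ∉ closedBall (0 : E) R → χ x = 0) :
    ∃ (L : ℝ≥0) (Cb : ℝ), LipschitzWith L (fun x => χ x • X x) ∧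
      ∀ x, ‖χ x • X x‖ ≤ Cb := by
  set g : E → E := fun x => χ x • X x with hg
  have hgC : ContDiff ℝ 1 g := hχ.smul hX
  obtain ⟨C, hC⟩ := (isCompact_closedBall (0 : E) R).exists_bound_of_continuousOn
    hX.continuous.continuousOn
  obtain ⟨C', hC'⟩ := (isCompact_closedBall (0 : E) (R + 1)).exists_bound_of_continuousOn
    (hgC.continuous_fderiv one_ne_zero).continuousOn
  have hg0 : ∀ x, x ∉ closedBall (0 : E) R → g x = 0 := fun x hx => by
    simp [hg, hχ0 x hx]
  have hfd : ∀ x, ‖fderiv ℝ g x‖ ≤ max C' 0 := by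
    intro x
    by_cases hx : x ∈ closedBall (0 : E) (R + 1)
    · exact (hC' x hx).trans (le_max_left _ _)
    · have hopen : IsOpen ((closedBall (0 : E) R)ᶜ) := isClosed_closedBall.isOpen_compl
      have hxmem : x ∈ (closedBall (0 : E) R)ᶜ := fun h =>
        hx (closedBall_subset_closedBall (by linarith) h)
      have heq : fderiv ℝ g x = fderiv ℝ (fun _ => (0 : E)) x :=
        Filter.EventuallyEq.fderiv_eq
          (Filter.eventuallyEq_of_mem (hopen.mem_nhds hxmem) (fun y hy => hg0 y hy))
      rw [heq]
      simpa using le_max_right C' 0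
  refine ⟨(max C' 0).toNNReal, max C 0, ?_, ?_⟩
  · apply lipschitzWith_of_nnnorm_fderiv_le (hgC.differentiable one_ne_zero)
    intro x
    rw [← NNReal.coe_le_coe, coe_nnnorm, Real.coe_toNNReal']
    exact (hfd x).trans (le_max_left _ _)
  · intro x
    by_cases hx : x ∈ closedBall (0 : E) R
    · calc ‖χ x • X x‖ = |χ x| * ‖X x‖ := by rw [norm_smul, Real.norm_eq_abs]
        _ ≤ 1 * ‖X x‖ := by
            apply mul_le_mul_of_nonneg_right _ (norm_nonneg _)
            rw [abs_of_nonneg (hχ01 x).1]; exact (hχ01 x).2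
        _ ≤ max C 0 := by rw [one_mul]; exact (hC x hx).trans (le_max_left _ _)
    · rw [hχ0 x hx]
      simpa using le_max_right C 0

/-- Global existence for the original field `X`. -/
lemma my_main_aux {X : E → E} (hX : ContDiff ℝ 1 X) {f : E → ℝ} (hf : ContDiff ℝ 1 f)
    (hproper : ∀ a b : ℝ, IsCompact (f ⁻¹' Icc a b))
    {C₁ C₂ : ℝ} (hC₁ : 0 < C₁) (hC₂ : 0 < C₂)
    (hbound : ∀ p : E, |fderiv ℝ f p (X p)| ≤ C₁ * |f p| + C₂) (x₀ : E) :
    ∃ γ : ℝ → E, γ 0 = x₀ ∧ ∀ t, HasDerivAt γ (X (γ t)) t := by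
  haveI : FiniteDimensional ℝ E := my_findim hproper
  have step : ∀ n : ℕ, ∃ γ : ℝ → E, γ 0 = x₀ ∧
      (∀ t ∈ Ioo (-(n + 1 : ℝ)) (n + 1), HasDerivAt γ (X (γ t)) t) ∧
      (∀ t ∈ Ioo (-(n + 1 : ℝ)) (n + 1),
        γ t ∈ f ⁻¹' Icc (-(gronwallBound |f x₀| C₁ C₂ (n + 1)))
          (gronwallBound |f x₀| C₁ C₂ (n + 1))) := by
    intro n
    set B : ℝ := gronwallBound |f x₀| C₁ C₂ (n + 1) with hB
    obtain ⟨χ, hχC, hχ01, hχ1, R, hχ0⟩ := my_cutoff (hproper (-B) B)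
    obtain ⟨L, Cb, hLip, hCb⟩ := my_truncate hX hχC hχ01 hχ0
    obtain ⟨γ, hγ0, hγd⟩ := my_global_exist hLip hCb x₀
    have hYbound : ∀ p, |fderiv ℝ f p (χ p • X p)| ≤ C₁ * |f p| + C₂ := by
      intro p
      rw [map_smul, smul_eq_mul, abs_mul]
      calc |χ p| * |fderiv ℝ f p (X p)| ≤ 1 * |fderiv ℝ f p (X p)| := by
            apply mul_le_mul_of_nonneg_right _ (abs_nonneg _)
            rw [abs_of_nonneg (hχ01 p).1]; exact (hχ01 p).2
        _ ≤ C₁ * |f p| + C₂ := by rw [one_mul]; exact hbound p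
    have hmem : ∀ t ∈ Ioo (-(n + 1 : ℝ)) (n + 1), γ t ∈ f ⁻¹' Icc (-B) B := by
      intro t ht
      have hI : t ∈ Ioo (-(n + 2 : ℝ)) (n + 2) := ⟨by linarith [ht.1], by linarith [ht.2]⟩
      have h0 : (0 : ℝ) ∈ Ioo (-(n + 2 : ℝ)) (n + 2) :=
        ⟨neg_lt_zero.mpr (by positivity), by positivity⟩
      have key := my_gron_two hf hYbound (fun s _ => hγd s) h0 hI
      rw [hγ0, sub_zero] at key
      have hmono : gronwallBound |f x₀| C₁ C₂ |t| ≤ B := by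
        apply my_gronwallBound_mono (abs_nonneg _) hC₁ hC₂.le
        exact abs_le.mpr ⟨by linarith [ht.1], by linarith [ht.2]⟩
      simp only [mem_preimage, mem_Icc]
      exact abs_le.mp (key.trans hmono)
    refine ⟨γ, hγ0, fun t ht => ?_, hmem⟩
    have hone : χ (γ t) = 1 := by simpa using hχ1 (hmem t ht)
    have hD := hγd t
    rwa [hone, one_smul] at hD
  choose γ hγ0 hγd hγmem using step
  refine my_glue x₀ γ hγ0 hγd (fun n m hnm t ht => ?_)
  have hnm' : ((n : ℝ) + 1) ≤ (m : ℝ) + 1 := by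
    have : (n : ℝ) ≤ m := Nat.cast_le.2 hnm
    linarith
  have hBle : gronwallBound |f x₀| C₁ C₂ (n + 1) ≤ gronwallBound |f x₀| C₁ C₂ (m + 1) :=
    my_gronwallBound_mono (abs_nonneg _) hC₁ hC₂.le hnm'
  obtain ⟨R, hR⟩ := (hproper (-(gronwallBound |f x₀| C₁ C₂ (m + 1)))
    (gronwallBound |f x₀| C₁ C₂ (m + 1))).isBounded.subset_closedBall 0
  obtain ⟨L, hL⟩ := my_lip_on_ball hX R
  have hsub : Ioo (-(n + 1 : ℝ)) (n + 1) ⊆ Ioo (-(m + 1 : ℝ)) (m + 1) :=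
    Ioo_subset_Ioo (by linarith) hnm'
  have key := ODE_solution_unique_of_mem_Ioo (v := fun _ : ℝ => X)
    (s := fun _ : ℝ => closedBall (0 : E) R) (fun _ _ => hL)
    (show (0 : ℝ) ∈ Ioo (-(n + 1 : ℝ)) (n + 1) from
      ⟨neg_lt_zero.mpr (by positivity), by positivity⟩)
    (fun s hs => ⟨hγd n s hs, hR (by
      have h1 := hγmem n s hs
      simp only [mem_preimage, mem_Icc] at h1 ⊢
      exact ⟨by linarith [h1.1], by linarith [h1.2]⟩)⟩)
    (fun s hs => ⟨hγd m s (hsub hs), hR (hγmem m s (hsub hs))⟩)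
    (by rw [hγ0 n, hγ0 m])
  exact key ht

end Aux


/-- Completeness criterion via a proper function: if `f : E → ℝ` is `C¹` and proper and
`|df_p(X p)| ≤ C₁ |f p| + C₂`, then the `C¹` vector field `X` is complete. -/
theorem stmt_7 {E : Type*} [NormedAddCommGroup E] [NormedSpace ℝ E] [CompleteSpace E]
    (X : E → E) (hX : ContDiff ℝ 1 X)
    (f : E → ℝ) (hf : ContDiff ℝ 1 f)
    (hproper : ∀ a b : ℝ, IsCompact (f ⁻¹' Set.Icc a b))
    (C₁ C₂ : ℝ) (hC₁ : 0 < C₁) (hC₂ : 0 < C₂)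
    (hbound : ∀ p : E, |fderiv ℝ f p (X p)| ≤ C₁ * |f p| + C₂)
    (a b : ℝ) (c : ℝ → E)
    (hc : ∀ t ∈ Set.Ioo a b, HasDerivAt c (X (c t)) t) :
    ∃ c' : ℝ → E, (∀ t ∈ Set.Ioo a b, c' t = c t) ∧ ∀ t : ℝ, HasDerivAt c' (X (c' t)) t := by
  by_cases hab : a < b
  · set t₀ : ℝ := (a + b) / 2 with ht₀def
    have ht₀ : t₀ ∈ Set.Ioo a b := ⟨by simp only [ht₀def]; linarith, by simp only [ht₀def]; linarith⟩
    obtain ⟨γ, hγ0, hγd⟩ := my_main_aux hX hf hproper hC₁ hC₂ hbound (c t₀)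
    set c' : ℝ → E := fun t => γ (t - t₀) with hc'def
    have hc'd : ∀ t, HasDerivAt c' (X (c' t)) t := by
      intro t
      have h1 : HasDerivAt (fun s : ℝ => s - t₀) 1 t := (hasDerivAt_id t).sub_const t₀
      have h2 := (hγd (t - t₀)).scomp t h1
      simpa [hc'def, Function.comp_def] using h2
    have hc't₀ : c' t₀ = c t₀ := by simp [hc'def, hγ0]
    haveI : FiniteDimensional ℝ E := my_findim hproper
    set B : ℝ := gronwallBound |f (c t₀)| C₁ C₂ (b - a) with hB
    have habs : ∀ t ∈ Set.Ioo a b, |t - t₀| ≤ b - a := by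
      intro t ht
      rw [abs_le]
      have h1 := ht.1
      have h2 := ht.2
      constructor
      · simp only [ht₀def]; linarith
      · simp only [ht₀def]; linarith
    have hcmem : ∀ t ∈ Set.Ioo a b, c t ∈ f ⁻¹' Set.Icc (-B) B := by
      intro t ht
      have key := my_gron_two hf hbound hc ht₀ ht
      have hmono : gronwallBound |f (c t₀)| C₁ C₂ |t - t₀| ≤ B :=
        my_gronwallBound_mono (abs_nonneg _) hC₁ hC₂.le (habs t ht)
      simp only [Set.mem_preimage, Set.mem_Icc]
      exact abs_le.mp (key.trans hmono)
    have hc'mem : ∀ t ∈ Set.Ioo a b, c' t ∈ f ⁻¹' Set.Icc (-B) B := by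
      intro t ht
      have key := my_gron_two hf hbound (γ := c') (α := a) (β := b) (fun s _ => hc'd s) ht₀ ht
      rw [hc't₀] at key
      have hmono : gronwallBound |f (c t₀)| C₁ C₂ |t - t₀| ≤ B :=
        my_gronwallBound_mono (abs_nonneg _) hC₁ hC₂.le (habs t ht)
      simp only [Set.mem_preimage, Set.mem_Icc]
      exact abs_le.mp (key.trans hmono)
    obtain ⟨R, hR⟩ := (hproper (-B) B).isBounded.subset_closedBall 0
    obtain ⟨L, hL⟩ := my_lip_on_ball hX R
    have key := ODE_solution_unique_of_mem_Ioo (v := fun _ : ℝ => X)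
      (s := fun _ : ℝ => Metric.closedBall (0 : E) R) (fun _ _ => hL) ht₀
      (fun s hs => ⟨hc'd s, hR (hc'mem s hs)⟩)
      (fun s hs => ⟨hc s hs, hR (hcmem s hs)⟩) hc't₀
    exact ⟨c', key, hc'd⟩
  · obtain ⟨γ, hγ0, hγd⟩ := my_main_aux hX hf hproper hC₁ hC₂ hbound 0
    exact ⟨γ, fun t ht => absurd ht (by simp [Set.Ioo_eq_empty hab]), hγd⟩
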